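/- Let X be a càdlàg function without upward jumps with X_0 = x and suppose y_x(∞) := lim_{t→∞} y(t) < ∞ where y solves y' = 1 - δ(y), y(0) = x for measurable δ : [x,∞) → [0,1) with unique ODE solution. If V is the natural tax process with rate δ, then V̄_t = y(X̄_t - x) < y_x(∞) for all t; in particular, for any a ≥ y_x(∞), the first passage time τ_a^+ = inf{t ≥ 0 : V_t > a} is infinite. -/

import Mathlib

open MeasureTheory Set Filter

/-- Running maximum of a path on `[0, t]`. -/
noncomputable def runMax (X : ℝ → ℝ) (t : ℝ) : ℝ := sSup (X '' Set.Icc 0 t)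

open Function

/-- clamped running max : constant below 0 -/
noncomputable def rmc (X : ℝ → ℝ) (t : ℝ) : ℝ := runMax X (max t 0)

lemma cadlag_bddAbove (X : ℝ → ℝ)
    (hrc : ∀ t ≥ (0:ℝ), ContinuousWithinAt X (Set.Ici t) t)
    (hll : ∀ t > (0:ℝ), ∃ l : ℝ, Tendsto X (nhdsWithin t (Set.Iio t)) (nhds l)) :
    ∀ T ≥ (0:ℝ), BddAbove (X '' Set.Icc 0 T) := by
  intro T hT
  set S : Set ℝ := {s | s ∈ Set.Icc 0 T ∧ BddAbove (X '' Set.Icc 0 s)} with hS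
  have h0 : (0:ℝ) ∈ S := by
    refine ⟨⟨le_rfl, hT⟩, ?_⟩
    rw [Set.Icc_self, Set.image_singleton]
    exact bddAbove_singleton
  have hne : S.Nonempty := ⟨0, h0⟩
  have hbdd : BddAbove S := ⟨T, fun s hs => hs.1.2⟩
  set m := sSup S with hm
  have hm0 : 0 ≤ m := le_csSup hbdd h0
  have hmT : m ≤ T := csSup_le hne fun s hs => hs.1.2
  have hmS : m ∈ S := by
    refine ⟨⟨hm0, hmT⟩, ?_⟩
    rcases eq_or_lt_of_le hm0 with h | h
    · rw [← h, Set.Icc_self, Set.image_singleton]; exact bddAbove_singleton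
    · obtain ⟨l, hl⟩ := hll m h
      have hev : ∀ᶠ u in nhdsWithin m (Set.Iio m), X u ≤ l + 1 :=
        hl.eventually (eventually_le_nhds (lt_add_one l))
      obtain ⟨a, ha, hsub⟩ := mem_nhdsLT_iff_exists_Ioo_subset.mp hev
      have ham : max a 0 < m := max_lt ha h
      obtain ⟨s₁, hs₁S, hs₁⟩ := exists_lt_of_lt_csSup hne ham
      have hsplit : X '' Set.Icc 0 m ⊆ (X '' Set.Icc 0 s₁) ∪ ({v | v ≤ l + 1} ) ∪ {X m} := by
        rintro v ⟨u, ⟨hu0, hum⟩, rfl⟩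
        rcases le_or_gt u s₁ with h1 | h1
        · exact Or.inl (Or.inl ⟨u, ⟨hu0, h1⟩, rfl⟩)
        · rcases eq_or_lt_of_le hum with h2 | h2
          · exact Or.inr (by simp [h2])
          · refine Or.inl (Or.inr (hsub ⟨?_, h2⟩))
            exact lt_of_le_of_lt (le_max_left a 0) (lt_of_le_of_lt hs₁.le h1)
      refine BddAbove.mono hsplit ?_
      exact ((hs₁S.2.union ⟨l+1, fun v hv => hv⟩).union bddAbove_singleton)
  rcases eq_or_lt_of_le hmT with h | h
  · rw [← h]; exact hmS.2
  · exfalso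
    have hev : ∀ᶠ u in nhdsWithin m (Set.Ici m), X u ≤ X m + 1 :=
      (hrc m hm0).eventually (eventually_le_nhds (lt_add_one (X m)))
    obtain ⟨b, hb, hsub⟩ := mem_nhdsGE_iff_exists_Ico_subset.mp hev
    set m' := min ((m + b)/2) T with hm'
    have hmm' : m < m' := lt_min (by have hbb := mem_Ioi.mp hb; linarith) h
    have hm'T : m' ≤ T := min_le_right _ _
    have hm'S : m' ∈ S := by
      refine ⟨⟨le_trans hm0 hmm'.le, hm'T⟩, ?_⟩
      have hsplit : X '' Set.Icc 0 m' ⊆ (X '' Set.Icc 0 m) ∪ {v | v ≤ X m + 1} := by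
        rintro v ⟨u, ⟨hu0, hum'⟩, rfl⟩
        rcases le_or_gt u m with h1 | h1
        · exact Or.inl ⟨u, ⟨hu0, h1⟩, rfl⟩
        · refine Or.inr (hsub ⟨h1.le, ?_⟩)
          have : m' ≤ (m + b)/2 := min_le_left _ _
          have hbb : b > m := mem_Ioi.mp hb
          calc u ≤ m' := hum'
          _ ≤ (m+b)/2 := this
          _ < b := by linarith
      exact BddAbove.mono hsplit (hmS.2.union ⟨X m + 1, fun v hv => hv⟩)
    exact absurd (le_csSup hbdd hm'S) (not_le.mpr hmm')

lemma rmc_eq (X : ℝ → ℝ) {t : ℝ} (ht : 0 ≤ t) : rmc X t = runMax X t := by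
  rw [rmc, max_eq_left ht]

lemma runMax_zero (X : ℝ → ℝ) : runMax X 0 = X 0 := by
  rw [runMax, Set.Icc_self, Set.image_singleton, csSup_singleton]

lemma le_runMax (X : ℝ → ℝ) (hbdd : ∀ T ≥ (0:ℝ), BddAbove (X '' Set.Icc 0 T))
    {s t : ℝ} (hs : 0 ≤ s) (hst : s ≤ t) : X s ≤ runMax X t :=
  le_csSup (hbdd t (hs.trans hst)) ⟨s, ⟨hs, hst⟩, rfl⟩

lemma runMax_le (X : ℝ → ℝ) {t B : ℝ} (ht : 0 ≤ t)
    (h : ∀ u ∈ Set.Icc (0:ℝ) t, X u ≤ B) : runMax X t ≤ B := by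
  refine csSup_le ⟨X 0, 0, ⟨le_rfl, ht⟩, rfl⟩ ?_
  rintro v ⟨u, hu, rfl⟩
  exact h u hu

lemma runMax_mono (X : ℝ → ℝ) (hbdd : ∀ T ≥ (0:ℝ), BddAbove (X '' Set.Icc 0 T))
    {s t : ℝ} (hs : 0 ≤ s) (hst : s ≤ t) : runMax X s ≤ runMax X t :=
  csSup_le_csSup (hbdd t (hs.trans hst)) ⟨X 0, 0, ⟨le_rfl, hs⟩, rfl⟩
    (Set.image_mono (Set.Icc_subset_Icc le_rfl hst))

lemma rmc_mono (X : ℝ → ℝ) (hbdd : ∀ T ≥ (0:ℝ), BddAbove (X '' Set.Icc 0 T)) :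
    Monotone (rmc X) := fun s t h =>
  runMax_mono X hbdd (le_max_right s 0) (max_le_max h le_rfl)

lemma rmc_continuous (X : ℝ → ℝ)
    (hrc : ∀ t ≥ (0:ℝ), ContinuousWithinAt X (Set.Ici t) t)
    (hll : ∀ t > (0:ℝ), ∃ l : ℝ, Tendsto X (nhdsWithin t (Set.Iio t)) (nhds l))
    (hnuj : ∀ t > (0:ℝ), ∀ l : ℝ,
      Tendsto X (nhdsWithin t (Set.Iio t)) (nhds l) → X t ≤ l)
    (hbdd : ∀ T ≥ (0:ℝ), BddAbove (X '' Set.Icc 0 T)) :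
    Continuous (rmc X) := by
  rw [continuous_iff_continuousAt]
  intro t
  rcases lt_or_ge t 0 with ht | ht
  · have hev : ∀ᶠ s in nhds t, runMax X 0 = rmc X s := by
      filter_upwards [Iio_mem_nhds ht] with s hs
      rw [rmc, max_eq_right (le_of_lt hs)]
    exact continuousAt_const.congr hev
  · have hright : ∀ ε > (0:ℝ), ∃ b, t < b ∧ rmc X b ≤ rmc X t + ε := by
      intro ε hε
      have hev : ∀ᶠ u in nhdsWithin t (Set.Ici t), X u ≤ X t + ε :=
        (hrc t ht).eventually (eventually_le_nhds (by linarith))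
      obtain ⟨b', hb', hsub⟩ := mem_nhdsGE_iff_exists_Ico_subset.mp hev
      have hbt' : t < b' := mem_Ioi.mp hb'
      refine ⟨(t + b')/2, by linarith, ?_⟩
      rw [rmc_eq X (by linarith : (0:ℝ) ≤ (t + b')/2), rmc_eq X ht]
      refine runMax_le X (by linarith) ?_
      rintro u ⟨hu0, hub⟩
      rcases le_or_gt u t with h1 | h1
      · have := le_runMax X hbdd hu0 le_rfl
        calc X u ≤ runMax X t := le_runMax X hbdd hu0 h1
        _ ≤ runMax X t + ε := by linarith
      · have : X u ≤ X t + ε := hsub ⟨h1.le, by linarith⟩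
        have h2 : X t ≤ runMax X t := le_runMax X hbdd ht le_rfl
        linarith
    have hleft : ∀ ε > (0:ℝ), ∃ a, a < t ∧ rmc X t ≤ rmc X a + ε := by
      intro ε hε
      rcases eq_or_lt_of_le ht with h0 | h0
      · refine ⟨-1, by linarith, ?_⟩
        have e1 : rmc X t = rmc X (-1) := by
          rw [rmc, rmc, max_eq_right (by norm_num : (-1:ℝ) ≤ 0), ← h0, max_self]
        rw [e1]; linarith
      · obtain ⟨l, hl⟩ := hll t h0
        have hXt : X t ≤ l := hnuj t h0 l hl
        have hev : ∀ᶠ u in nhdsWithin t (Set.Iio t), X u ∈ Set.Ioo (l - ε/2) (l + ε/2) :=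
          hl (Ioo_mem_nhds (by linarith) (by linarith))
        obtain ⟨a', ha', hsub⟩ := mem_nhdsLT_iff_exists_Ioo_subset.mp hev
        have ha't : a' < t := mem_Iio.mp ha'
        set u₀ := (max a' 0 + t)/2 with hu₀def
        have hmaxlt : max a' 0 < t := max_lt ha't h0
        have hu₀1 : max a' 0 < u₀ := by rw [hu₀def]; linarith
        have hu₀2 : u₀ < t := by rw [hu₀def]; linarith
        have hu₀0 : 0 ≤ u₀ := le_trans (le_max_right a' 0) hu₀1.le
        set a := (u₀ + t)/2 with hadef
        have hau : u₀ < a := by rw [hadef]; linarith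
        have hat : a < t := by rw [hadef]; linarith
        have ha0 : 0 ≤ a := hu₀0.trans hau.le
        have hXu₀ : l - ε/2 ≤ X u₀ := (hsub ⟨lt_of_le_of_lt (le_max_left a' 0) hu₀1, hu₀2⟩).1.le
        have hl_le : l ≤ runMax X a + ε/2 := by
          have := le_runMax X hbdd hu₀0 hau.le
          linarith
        refine ⟨a, hat, ?_⟩
        rw [rmc_eq X ht, rmc_eq X ha0]
        refine runMax_le X ht ?_
        rintro u ⟨hu0, hut⟩
        rcases le_or_gt u a with h1 | h1
        · have := le_runMax X hbdd hu0 h1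
          have h2 : runMax X a ≤ runMax X a + ε := by linarith
          linarith
        · rcases eq_or_lt_of_le hut with h2 | h2
          · rw [h2]; linarith
          · have : X u ∈ Set.Ioo (l - ε/2) (l + ε/2) :=
              hsub ⟨lt_trans (lt_of_le_of_lt (le_max_left a' 0) hu₀1) (hau.trans h1), h2⟩
            have := this.2.le
            linarith
    rw [Metric.continuousAt_iff]
    intro ε hε
    obtain ⟨b, hbt, hb⟩ := hright (ε/2) (by linarith)
    obtain ⟨a, hat, ha⟩ := hleft (ε/2) (by linarith)
    refine ⟨min (b - t) (t - a), lt_min (by linarith) (by linarith), fun s hs => ?_⟩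
    rw [Real.dist_eq] at hs ⊢
    have h1 : |s - t| < b - t := lt_of_lt_of_le hs (min_le_left _ _)
    have h2 : |s - t| < t - a := lt_of_lt_of_le hs (min_le_right _ _)
    rw [abs_lt] at h1 h2
    have hs1 : s ≤ b := by linarith [h1.2]
    have hs2 : a ≤ s := by linarith [h2.1]
    have hm1 : rmc X s ≤ rmc X b := rmc_mono X hbdd hs1
    have hm2 : rmc X a ≤ rmc X s := rmc_mono X hbdd hs2
    rw [abs_lt]
    constructor <;> linarith

lemma stieltjes_Ioc (F : StieltjesFunction ℝ) (X : ℝ → ℝ)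
    (hF : ∀ t ≥ (0:ℝ), F t = runMax X t) {a b : ℝ} (ha : 0 ≤ a) (hab : a ≤ b) :
    F.measure (Set.Ioc a b) = ENNReal.ofReal (rmc X b - rmc X a) := by
  rw [F.measure_Ioc, hF a ha, hF b (ha.trans hab), rmc, rmc,
    max_eq_left ha, max_eq_left (ha.trans hab)]

lemma stieltjes_noatom (F : StieltjesFunction ℝ) (X : ℝ → ℝ)
    (hF : ∀ t ≥ (0:ℝ), F t = runMax X t) (hc : Continuous (rmc X))
    {s : ℝ} (hs : 0 < s) : F.measure {s} = 0 := by
  have htd : Tendsto F (nhdsWithin s (Set.Iio s)) (nhds (F s)) := by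
    have h1 : Tendsto (rmc X) (nhdsWithin s (Set.Iio s)) (nhds (rmc X s)) :=
      (hc.tendsto s).mono_left nhdsWithin_le_nhds
    have h2 : rmc X =ᶠ[nhdsWithin s (Set.Iio s)] F := by
      filter_upwards [Ioo_mem_nhdsLT hs] with u hu
      rw [hF u hu.1.le, rmc, max_eq_left hu.1.le]
    have h3 : rmc X s = F s := by rw [hF s hs.le, rmc, max_eq_left hs.le]
    exact Tendsto.congr' h2 (h3 ▸ h1)
  have hLL : leftLim F s = F s :=
    leftLim_eq_of_tendsto htd
  rw [F.measure_singleton, hLL, sub_self, ENNReal.ofReal_zero]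

lemma map_pushforward (φ : ℝ → ℝ) (hmono : Monotone φ) (hcont : Continuous φ)
    (F : StieltjesFunction ℝ) (hFφ : ∀ s ≥ (0:ℝ), F s = φ s) {t : ℝ} (ht : 0 ≤ t) :
    Measure.map φ (F.measure.restrict (Set.Ioc 0 t)) =
      volume.restrict (Set.Ioc (φ 0) (φ t)) := by
  have hpq : φ 0 ≤ φ t := hmono ht
  set S : ℝ → Set ℝ := fun v => {0} ∪ {s | s ∈ Set.Icc 0 t ∧ φ s ≤ v} with hSdef
  have hSne : ∀ v, (S v).Nonempty := fun v => ⟨0, Or.inl rfl⟩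
  have hSbdd : ∀ v, BddAbove (S v) := by
    intro v
    refine ⟨t, ?_⟩
    rintro s (rfl | hs)
    · exact ht
    · exact hs.1.2
  set τ : ℝ → ℝ := fun v => sSup (S v) with hτdef
  have hτ0 : ∀ v, 0 ≤ τ v := fun v => le_csSup (hSbdd v) (Or.inl rfl)
  have hτt : ∀ v, τ v ≤ t := by
    intro v
    refine csSup_le (hSne v) ?_
    rintro s (rfl | hs)
    · exact ht
    · exact hs.1.2
  have hSclosed : ∀ v, IsClosed (S v) := by
    intro v
    refine IsClosed.union isClosed_singleton ?_
    have : {s | s ∈ Set.Icc 0 t ∧ φ s ≤ v} = Set.Icc 0 t ∩ φ ⁻¹' (Set.Iic v) := rfl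
    rw [this]
    exact isClosed_Icc.inter (IsClosed.preimage hcont isClosed_Iic)
  have hτmem : ∀ v, τ v ∈ S v := fun v => (hSclosed v).csSup_mem (hSne v) (hSbdd v)
  have hφτ_le : ∀ v, φ (τ v) ≤ max (φ 0) v := by
    intro v
    rcases hτmem v with h | h
    · rw [Set.mem_singleton_iff] at h; rw [h]; exact le_max_left _ _
    · exact le_trans h.2 (le_max_right _ _)
  have hle_τ : ∀ v s, s ∈ Set.Icc 0 t → φ s ≤ v → s ≤ τ v :=
    fun v s hs h => le_csSup (hSbdd v) (Or.inr ⟨hs, h⟩)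
  have key1 : ∀ v, φ (τ v) = max (φ 0) (min v (φ t)) := by
    intro v
    rcases le_total v (φ 0) with h | h
    · have hmin : min v (φ t) = v := min_eq_left (h.trans hpq)
      rw [hmin, max_eq_left h]
      refine le_antisymm ?_ (hmono (hτ0 v))
      rcases hτmem v with h1 | h1
      · rw [Set.mem_singleton_iff] at h1; rw [h1]
      · exact h1.2.trans h
    · rcases le_total (φ t) v with h2 | h2
      · have hτveq : τ v = t :=
          le_antisymm (hτt v) (hle_τ v t ⟨ht, le_rfl⟩ h2)
        rw [hτveq, min_eq_right h2, max_eq_right hpq]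
      · obtain ⟨s₀, hs₀mem, hs₀⟩ :=
          intermediate_value_Icc ht hcont.continuousOn (Set.mem_Icc.mpr ⟨h, h2⟩)
        have h1 : s₀ ≤ τ v := hle_τ v s₀ hs₀mem hs₀.le
        have h3 : v ≤ φ (τ v) := le_trans (le_of_eq hs₀.symm) (hmono h1)
        have h4 : φ (τ v) ≤ v := (hφτ_le v).trans (max_le h le_rfl)
        rw [le_antisymm h4 h3, min_eq_left h2, max_eq_right h]
  have key2 : ∀ a b : ℝ, φ ⁻¹' (Set.Ioc a b) ∩ Set.Ioc 0 t = Set.Ioc (τ a) (τ b) := by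
    intro a b
    ext s
    simp only [Set.mem_inter_iff, Set.mem_preimage, Set.mem_Ioc]
    constructor
    · rintro ⟨⟨has, hsb⟩, hs0, hst⟩
      refine ⟨?_, hle_τ b s ⟨hs0.le, hst⟩ hsb⟩
      by_contra hcon
      push_neg at hcon
      rcases le_or_gt (φ 0) a with hc | hc
      · have h1 : φ s ≤ φ (τ a) := hmono hcon
        have h2 : φ (τ a) ≤ a := (hφτ_le a).trans (max_le hc le_rfl)
        exact absurd (h1.trans h2) (not_le.mpr has)
      · have hτa0 : τ a = 0 := by
          rcases hτmem a with h1 | h1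
          · exact Set.mem_singleton_iff.mp h1
          · exfalso
            have := hmono (hτ0 a)
            exact absurd (h1.2) (not_le.mpr (lt_of_lt_of_le hc this))
        rw [hτa0] at hcon
        exact absurd hs0 (not_lt.mpr hcon)
    · rintro ⟨hsa, hsb⟩
      have hs0 : 0 < s := lt_of_le_of_lt (hτ0 a) hsa
      have hst : s ≤ t := le_trans hsb (hτt b)
      refine ⟨⟨?_, ?_⟩, hs0, hst⟩
      · by_contra hcon
        push_neg at hcon
        exact absurd (hle_τ a s ⟨hs0.le, hst⟩ hcon) (not_le.mpr hsa)
      · have h1 : φ s ≤ φ (τ b) := hmono hsb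
        rcases hτmem b with h2 | h2
        · exfalso
          rw [Set.mem_singleton_iff] at h2
          rw [h2] at hsb
          exact absurd (lt_of_lt_of_le hs0 hsb) (lt_irrefl 0)
        · exact h1.trans h2.2
  haveI hfin : IsFiniteMeasure (F.measure.restrict (Set.Ioc 0 t)) := by
    constructor
    rw [Measure.restrict_apply_univ, F.measure_Ioc]
    exact ENNReal.ofReal_lt_top
  haveI hfin2 : IsFiniteMeasure (Measure.map φ (F.measure.restrict (Set.Ioc 0 t))) := by
    constructor
    rw [Measure.map_apply hcont.measurable MeasurableSet.univ, Set.preimage_univ]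
    exact measure_lt_top _ _
  refine MeasureTheory.Measure.ext_of_Ioc_finite _ _ ?_ ?_
  · rw [Measure.map_apply hcont.measurable MeasurableSet.univ, Set.preimage_univ,
      Measure.restrict_apply_univ, Measure.restrict_apply_univ, F.measure_Ioc,
      Real.volume_Ioc, hFφ t ht, hFφ 0 le_rfl]
  · intro a b hab
    rw [Measure.map_apply hcont.measurable measurableSet_Ioc,
      Measure.restrict_apply (hcont.measurable measurableSet_Ioc),
      Measure.restrict_apply measurableSet_Ioc, key2, F.measure_Ioc,
      hFφ (τ b) (hτ0 b), hFφ (τ a) (hτ0 a), key1, key1,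
      Set.Ioc_inter_Ioc, Real.volume_Ioc]
    set p := φ 0
    set q := φ t
    rcases le_or_gt (min b q) (max a p) with h | h
    · have hcb : max p (min b q) ≤ max p (min a q) := by
        rcases le_total a q with h1 | h1
        · calc max p (min b q) ≤ max p (max a p) := max_le_max le_rfl h
            _ = max a p := max_eq_right (le_max_right a p)
            _ = max p a := max_comm a p
            _ = max p (min a q) := by rw [min_eq_left h1]
        · calc max p (min b q) ≤ max p q := max_le_max le_rfl (min_le_right b q)
            _ = max p (min a q) := by rw [min_eq_right h1]
      rw [ENNReal.ofReal_of_nonpos (by linarith), ENNReal.ofReal_of_nonpos (by linarith)]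
    · have h1 : a < q := lt_of_le_of_lt (le_max_left a p) (lt_of_lt_of_le h (min_le_right b q))
      have h2 : p < min b q := lt_of_le_of_lt (le_max_right a p) h
      rw [max_eq_right h2.le, min_eq_left h1.le, max_comm p a]

lemma y_integrable (x : ℝ) (δ : ℝ → ℝ) (hδmeas : Measurable δ)
    (hδ : ∀ z ≥ x, 0 ≤ δ z ∧ δ z < 1) (y : ℝ → ℝ)
    (hyrange : ∀ t ≥ (0:ℝ), x ≤ y t)
    (hy : ∀ t ≥ (0:ℝ), y t = x + ∫ s in (0:ℝ)..t, (1 - δ (y s))) :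
    ∀ t ≥ (0:ℝ), IntervalIntegrable (fun s => 1 - δ (y s)) volume 0 t := by
  set f : ℝ → ℝ := fun s => 1 - δ (y s) with hfdef
  have hf_bdd : ∀ s ≥ (0:ℝ), 0 < f s ∧ f s ≤ 1 := by
    intro s hs
    have := hδ (y s) (hyrange s hs)
    constructor <;> simp only [hfdef] <;> linarith [this.1, this.2]
  by_contra hcon
  push_neg at hcon
  obtain ⟨t₀, ht₀, hni⟩ := hcon
  set Bad : Set ℝ := {u : ℝ | 0 ≤ u ∧ ¬ IntervalIntegrable f volume 0 u} with hBdef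
  have hBad_ne : Bad.Nonempty := ⟨t₀, ht₀, hni⟩
  have hBad_bdd : BddBelow Bad := ⟨0, fun s hs => hs.1⟩
  set τ := sInf Bad with hτdef
  have hτ0 : 0 ≤ τ := le_csInf hBad_ne fun s hs => hs.1
  have hgood : ∀ u, 0 ≤ u → u < τ → IntervalIntegrable f volume 0 u := by
    intro u hu huτ
    by_contra hbad
    exact absurd (csInf_le hBad_bdd ⟨hu, hbad⟩) (not_le.mpr huτ)
  have hbad_up : ∀ u, τ < u → ¬ IntervalIntegrable f volume 0 u := by
    intro u hu hint
    have hu0 : 0 ≤ u := hτ0.trans hu.le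
    have hlow : ∀ b ∈ Bad, u ≤ b := by
      intro b hb
      by_contra hc
      push_neg at hc
      refine hb.2 (hint.mono_set ?_)
      rw [Set.uIcc_of_le hb.1, Set.uIcc_of_le hu0]
      exact Set.Icc_subset_Icc le_rfl hc.le
    exact absurd (le_csInf hBad_ne hlow) (not_le.mpr hu)
  have hyx : ∀ u, τ < u → y u = x := by
    intro u hu
    have hu0 : 0 ≤ u := hτ0.trans hu.le
    rw [hy u hu0, intervalIntegral.integral_undef (hbad_up u hu), add_zero]
  have hτgood : IntervalIntegrable f volume 0 τ := by
    rcases eq_or_lt_of_le hτ0 with h0 | h0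
    · rw [← h0]
    · rw [intervalIntegrable_iff_integrableOn_Ioc_of_le hτ0]
      have hsub : Set.Ioo (0:ℝ) τ ⊆ ⋃ n : ℕ, Set.Ioc (0:ℝ) (τ - τ/(n+2)) := by
        intro s hs
        obtain ⟨n, hn⟩ := exists_nat_gt (τ/(τ - s))
        have hτs : 0 < τ - s := by linarith [hs.2]
        have hn0 : (0:ℝ) < n + 2 := by positivity
        have h1 : τ / (n+2) < τ - s := by
          rw [div_lt_iff₀ hn0]
          have h2 : τ < (n:ℝ) * (τ - s) := by
            rw [← div_lt_iff₀ hτs] at *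
            linarith [hn]
          nlinarith [hτs, hs.1]
        exact Set.mem_iUnion.mpr ⟨n, ⟨hs.1, by linarith⟩⟩
      have haes : AEStronglyMeasurable f (volume.restrict (Set.Ioc 0 τ)) := by
        have h1 : AEMeasurable f (volume.restrict (⋃ n : ℕ, Set.Ioc (0:ℝ) (τ - τ/(n+2)))) := by
          rw [aemeasurable_iUnion_iff]
          intro n
          have hn0 : (0:ℝ) < (n:ℝ) + 2 := by positivity
          have hle : τ/((n:ℝ)+2) ≤ τ := by
            rw [div_le_iff₀ hn0]
            nlinarith [hτ0]
          have hlt : τ - τ/((n:ℝ)+2) < τ := by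
            have : 0 < τ/((n:ℝ)+2) := by positivity
            linarith
          have := (hgood (τ - τ/((n:ℝ)+2)) (by linarith) hlt)
          rw [intervalIntegrable_iff_integrableOn_Ioc_of_le (by linarith)] at this
          exact this.aemeasurable
        have h2 : volume.restrict (Set.Ioc (0:ℝ) τ) = volume.restrict (Set.Ioo (0:ℝ) τ) :=
          (Measure.restrict_congr_set Ioo_ae_eq_Ioc).symm
        rw [h2]
        refine AEMeasurable.aestronglyMeasurable ?_
        exact h1.mono_measure (Measure.restrict_mono hsub le_rfl)
      refine ⟨haes, ?_⟩
      refine HasFiniteIntegral.restrict_of_bounded (C := 1) measure_Ioc_lt_top ?_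
      refine (ae_restrict_iff' measurableSet_Ioc).mpr ?_
      filter_upwards with s hs
      have := hf_bdd s hs.1.le
      rw [Real.norm_eq_abs, abs_le]
      constructor <;> linarith [this.1, this.2]
  have h2 : IntervalIntegrable f volume τ (τ+1) := by
    rw [intervalIntegrable_iff_integrableOn_Ioc_of_le (by linarith)]
    have hconst : IntegrableOn (fun _ : ℝ => 1 - δ x) (Set.Ioc τ (τ+1)) volume := by
      rw [integrableOn_const_iff]
      exact Or.inr measure_Ioc_lt_top
    refine IntegrableOn.congr_fun hconst (fun u hu => ?_) measurableSet_Ioc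
    simp only [hfdef]
    rw [hyx u hu.1]
  exact hbad_up (τ+1) (by linarith) (hτgood.trans h2)

lemma integral_pushforward (φ : ℝ → ℝ) (hmono : Monotone φ) (hcont : Continuous φ)
    (F : StieltjesFunction ℝ) (hFφ : ∀ s ≥ (0:ℝ), F s = φ s) {t : ℝ} (ht : 0 ≤ t)
    (g : ℝ → ℝ) (hg : Measurable g)
    (hmap : Measure.map φ (F.measure.restrict (Set.Ioc 0 t)) =
      volume.restrict (Set.Ioc (φ 0) (φ t))) :
    ∫ s in Set.Ioc 0 t, g (φ s) ∂F.measure = ∫ v in Set.Ioc (φ 0) (φ t), g v := by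
  have h1 : ∫ s in Set.Ioc 0 t, g (φ s) ∂F.measure
      = ∫ v, g v ∂(Measure.map φ (F.measure.restrict (Set.Ioc 0 t))) :=
    (integral_map hcont.measurable.aemeasurable hg.aestronglyMeasurable).symm
  rw [h1, hmap]

lemma y_props (x : ℝ) (δ : ℝ → ℝ)
    (hδ : ∀ z ≥ x, 0 ≤ δ z ∧ δ z < 1) (y : ℝ → ℝ)
    (hyrange : ∀ t ≥ (0:ℝ), x ≤ y t)
    (hy : ∀ t ≥ (0:ℝ), y t = x + ∫ s in (0:ℝ)..t, (1 - δ (y s)))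
    (hint : ∀ t ≥ (0:ℝ), IntervalIntegrable (fun s => 1 - δ (y s)) volume 0 t)
    (yinf : ℝ) (hyinf : Tendsto y atTop (nhds yinf)) :
    y 0 = x ∧
    (∀ s t : ℝ, 0 ≤ s → s ≤ t → y s ≤ y t ∧ y t - y s ≤ t - s) ∧
    (∀ t ≥ (0:ℝ), y t < yinf) ∧
    (∀ v : ℝ, x ≤ v → v < yinf → ∃ c, 0 ≤ c ∧ y c = v) := by
  set f : ℝ → ℝ := fun s => 1 - δ (y s) with hfdef
  have hf_bdd : ∀ s ≥ (0:ℝ), 0 < f s ∧ f s ≤ 1 := by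
    intro s hs
    have := hδ (y s) (hyrange s hs)
    constructor <;> simp only [hfdef] <;> linarith [this.1, this.2]
  have h0 : y 0 = x := by
    rw [hy 0 le_rfl, intervalIntegral.integral_same, add_zero]
  have hsub : ∀ s t : ℝ, 0 ≤ s → s ≤ t → IntervalIntegrable f volume s t := by
    intro s t hs hst
    refine (hint t (hs.trans hst)).mono_set ?_
    rw [Set.uIcc_of_le hst, Set.uIcc_of_le (hs.trans hst)]
    exact Set.Icc_subset_Icc hs le_rfl
  have hdiff : ∀ s t : ℝ, 0 ≤ s → s ≤ t → y t - y s = ∫ u in s..t, f u := by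
    intro s t hs hst
    rw [hy t (hs.trans hst), hy s hs]
    have := intervalIntegral.integral_interval_sub_left
      (hint t (hs.trans hst)) (hint s hs)
    rw [← this]
    ring
  have hmono : ∀ s t : ℝ, 0 ≤ s → s ≤ t → y s ≤ y t ∧ y t - y s ≤ t - s := by
    intro s t hs hst
    have hd := hdiff s t hs hst
    constructor
    · have h1 : 0 ≤ ∫ u in s..t, f u :=
        intervalIntegral.integral_nonneg hst
          (fun u hu => (hf_bdd u (hs.trans hu.1)).1.le)
    
      linarith [hd, h1]
    · have h2 : ∫ u in s..t, f u ≤ ∫ _ in s..t, (1:ℝ) := by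
        refine intervalIntegral.integral_mono_on hst (hsub s t hs hst)
          intervalIntegrable_const ?_
        exact fun u hu => (hf_bdd u (hs.trans hu.1)).2
      rw [intervalIntegral.integral_const, smul_eq_mul, mul_one] at h2
      linarith [hd, h2]
  have hlt : ∀ t ≥ (0:ℝ), y t < yinf := by
    intro t ht
    have h1 : 0 < ∫ u in t..(t+1), f u := by
      refine intervalIntegral.intervalIntegral_pos_of_pos_on
        (hsub t (t+1) ht (by linarith)) ?_ (by linarith)
      exact fun u hu => (hf_bdd u (ht.trans hu.1.le)).1
    have hd := hdiff t (t+1) ht (by linarith)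
    have h2 : y (t+1) ≤ yinf := by
      refine ge_of_tendsto hyinf ?_
      filter_upwards [eventually_ge_atTop (t+1)] with u hu
      exact (hmono (t+1) u (by linarith) hu).1
    linarith
  refine ⟨h0, hmono, hlt, ?_⟩
  intro v hv1 hv2
  obtain ⟨N, hN1, hN2⟩ : ∃ N, v < y N ∧ 0 ≤ N :=
    ((hyinf.eventually (eventually_gt_nhds hv2)).and (eventually_ge_atTop 0)).exists
  have hcont : ContinuousOn y (Set.Icc 0 N) := by
    have hlip : LipschitzOnWith 1 y (Set.Icc 0 N) := by
      refine LipschitzOnWith.of_dist_le_mul ?_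
      intro a ha b hb
      rw [NNReal.coe_one, one_mul, Real.dist_eq, Real.dist_eq]
      rcases le_total a b with hab | hab
      · have := hmono a b ha.1 hab
        rw [abs_of_nonpos (by linarith [this.1]), abs_of_nonpos (by linarith)]
        linarith [this.2]
      · have := hmono b a hb.1 hab
        rw [abs_of_nonneg (by linarith [this.1]), abs_of_nonneg (by linarith)]
        linarith [this.2]
    exact hlip.continuousOn
  obtain ⟨c, hc, hyc⟩ := intermediate_value_Icc hN2 hcont
    (Set.mem_Icc.mpr ⟨h0 ▸ hv1, hN1.le⟩)
  exact ⟨c, hc.1, hyc⟩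

lemma V_bdd (x : ℝ) (X : ℝ → ℝ) (hX0 : X 0 = x)
    (hrc : ∀ t ≥ (0:ℝ), ContinuousWithinAt X (Set.Ici t) t)
    (hll : ∀ t > (0:ℝ), ∃ l : ℝ, Tendsto X (nhdsWithin t (Set.Iio t)) (nhds l))
    (hnuj : ∀ t > (0:ℝ), ∀ l : ℝ,
      Tendsto X (nhdsWithin t (Set.Iio t)) (nhds l) → X t ≤ l)
    (F : StieltjesFunction ℝ) (hF : ∀ t ≥ (0:ℝ), F t = runMax X t)
    (δ : ℝ → ℝ) (hδmeas : Measurable δ)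
    (hδ : ∀ z ≥ x, 0 ≤ δ z ∧ δ z < 1)
    (V : ℝ → ℝ)
    (hV : ∀ t ≥ (0:ℝ), V t = X t - ∫ s in Set.Ioc 0 t, δ (runMax V s) ∂F.measure) :
    V 0 = x ∧ ∀ T ≥ (0:ℝ), BddAbove (V '' Set.Icc 0 T) := by
  have hbddX := cadlag_bddAbove X hrc hll
  have hφc : Continuous (rmc X) := rmc_continuous X hrc hll hnuj hbddX
  have hV0 : V 0 = x := by
    rw [hV 0 le_rfl, Set.Ioc_self, setIntegral_empty, sub_zero, hX0]
  refine ⟨hV0, ?_⟩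
  intro T hT
  set Good : ℝ → Prop := fun s => BddAbove (V '' Set.Icc 0 s) with hGdef
  have hGood_down : ∀ s u, Good s → u ≤ s → Good u := fun s u hs hus =>
    BddAbove.mono (Set.image_mono (Set.Icc_subset_Icc le_rfl hus)) hs
  have hxle : ∀ u, 0 ≤ u → Good u → x ≤ runMax V u := by
    intro u hu hg
    rw [← hV0]
    exact le_csSup hg ⟨0, ⟨le_rfl, hu⟩, rfl⟩
  have hclosure : ∀ s, 0 ≤ s → s ≤ T → (∀ u, 0 ≤ u → u < s → Good u) → Good s := by
    intro s hs hsT hbelow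
    refine ⟨runMax X T, ?_⟩
    rintro v ⟨r, ⟨hr0, hrs⟩, rfl⟩
    have hIr : 0 ≤ ∫ u in Set.Ioc 0 r, δ (runMax V u) ∂F.measure := by
      rcases eq_or_lt_of_le hr0 with h0 | h0
      · rw [← h0, Set.Ioc_self, setIntegral_empty]
      · refine integral_nonneg_of_ae ?_
        have h1 : ∀ᵐ u ∂F.measure.restrict (Set.Ioc 0 r), u ∈ Set.Ioc 0 r :=
          ae_restrict_mem measurableSet_Ioc
        have h2 : ∀ᵐ u ∂F.measure.restrict (Set.Ioc 0 r), u ≠ r := by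
          rw [ae_iff]
          have he : {u : ℝ | ¬ u ≠ r} = {r} := by ext u; simp
          rw [he, Measure.restrict_apply (measurableSet_singleton r)]
          exact measure_mono_null Set.inter_subset_left (stieltjes_noatom F X hF hφc h0)
        filter_upwards [h1, h2] with u hu1 hu2
        have huls : u < s := lt_of_lt_of_le (lt_of_le_of_ne hu1.2 hu2) hrs
        exact (hδ (runMax V u) (hxle u hu1.1.le (hbelow u hu1.1.le huls))).1
    have h2 : X r ≤ runMax X T := le_runMax X hbddX hr0 (hrs.trans hsT)
    rw [hV r hr0]
    linarith
  by_contra hbadT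
  set Bad := {s : ℝ | s ∈ Set.Icc 0 T ∧ ¬ Good s} with hBdef
  have hBad_ne : Bad.Nonempty := ⟨T, ⟨hT, le_rfl⟩, hbadT⟩
  have hBad_bdd : BddBelow Bad := ⟨0, fun s hs => hs.1.1⟩
  set τ := sInf Bad with hτdef
  have hτ0 : 0 ≤ τ := le_csInf hBad_ne fun s hs => hs.1.1
  have hτT : τ ≤ T := csInf_le hBad_bdd ⟨⟨hT, le_rfl⟩, hbadT⟩
  have hgoodlt : ∀ u, 0 ≤ u → u < τ → Good u := by
    intro u hu huτ
    by_contra hbad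
    exact absurd (csInf_le hBad_bdd ⟨⟨hu, (lt_of_lt_of_le huτ hτT).le⟩, hbad⟩)
      (not_le.mpr huτ)
  have hτgood : Good τ := hclosure τ hτ0 hτT hgoodlt
  have hbad_up : ∀ u, τ < u → u ≤ T → ¬ Good u := by
    intro u hu huT hg
    have hlow : ∀ b ∈ Bad, u ≤ b := by
      intro b hb
      by_contra hc
      push_neg at hc
      exact hb.2 (hGood_down u b hg hc.le)
    exact absurd (le_csInf hBad_ne hlow) (not_le.mpr hu)
  have hτltT : τ < T := lt_of_le_of_ne hτT (fun heq => hbadT (heq ▸ hτgood))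
  have hrm0 : ∀ u, τ < u → u ≤ T → runMax V u = 0 := by
    intro u h1 h2
    exact Real.sSup_of_not_bddAbove (hbad_up u h1 h2)
  set g : ℝ → ℝ := fun u => runMax V (min (max u 0) τ) with hgdef
  have hgmono : Monotone g := by
    intro a b hab
    have hbτ : Good (min (max b 0) τ) := hGood_down τ _ hτgood (min_le_right _ _)
    exact csSup_le_csSup hbτ ⟨V 0, 0, ⟨le_rfl, le_min (le_max_right a 0) hτ0⟩, rfl⟩
      (Set.image_mono (Set.Icc_subset_Icc le_rfl
        (min_le_min (max_le_max hab le_rfl) le_rfl)))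
  have hgx : ∀ u, x ≤ g u := fun u =>
    hxle _ (le_min (le_max_right u 0) hτ0) (hGood_down τ _ hτgood (min_le_right _ _))
  set h : ℝ → ℝ := fun u => if u ≤ τ then δ (g u) else δ 0 with hhdef
  have hhmeas : Measurable h :=
    Measurable.ite measurableSet_Iic (hδmeas.comp hgmono.measurable) measurable_const
  set C := max 1 |δ 0| with hCdef
  have hhbd : ∀ u, ‖h u‖ ≤ C := by
    intro u
    by_cases hc : u ≤ τ <;> simp only [hhdef, hc, if_true, if_false]
    · have := hδ (g u) (hgx u)
      rw [Real.norm_eq_abs]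
      refine le_trans ?_ (le_max_left 1 |δ 0|)
      rw [abs_le]
      constructor <;> linarith [this.1, this.2]
    · rw [Real.norm_eq_abs]
      exact le_max_right _ _
  have hheq : ∀ u ∈ Set.Ioc 0 T, δ (runMax V u) = h u := by
    intro u hu
    by_cases hc : u ≤ τ
    · have he : runMax V u = g u := by
        simp only [hgdef, max_eq_left hu.1.le, min_eq_left hc]
      rw [he, hhdef]
      simp [hc]
    · push_neg at hc
      rw [hrm0 u hc hu.2, hhdef]
      simp [not_le.mpr hc]
  set M := C * (F.measure (Set.Ioc 0 T)).toReal with hMdef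
  have hIbd : ∀ r, 0 ≤ r → r ≤ T →
      |∫ u in Set.Ioc 0 r, δ (runMax V u) ∂F.measure| ≤ M := by
    intro r hr0 hrT
    have he : ∫ u in Set.Ioc 0 r, δ (runMax V u) ∂F.measure
        = ∫ u in Set.Ioc 0 r, h u ∂F.measure :=
      setIntegral_congr_fun measurableSet_Ioc (fun u hu => hheq u ⟨hu.1, hu.2.trans hrT⟩)
    have hfin : F.measure (Set.Ioc (0:ℝ) r) < ⊤ := by
      rw [F.measure_Ioc]; exact ENNReal.ofReal_lt_top
    rw [he, ← Real.norm_eq_abs]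
    calc ‖∫ u in Set.Ioc 0 r, h u ∂F.measure‖ ≤ C * (F.measure (Set.Ioc 0 r)).toReal :=
      norm_setIntegral_le_of_norm_le_const hfin (fun u _ => hhbd u)
    _ ≤ M := by
      refine mul_le_mul_of_nonneg_left ?_ (le_trans zero_le_one (le_max_left 1 |δ 0|))
      refine ENNReal.toReal_mono ?_ (measure_mono (Set.Ioc_subset_Ioc le_rfl hrT))
      rw [F.measure_Ioc]
      exact ENNReal.ofReal_ne_top
  refine hbadT ⟨runMax X T + M, ?_⟩
  rintro v ⟨r, ⟨hr0, hrT⟩, rfl⟩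
  rw [hV r hr0]
  have h1 := abs_le.mp (hIbd r hr0 hrT)
  have h2 : X r ≤ runMax X T := le_runMax X hbddX hr0 hrT
  linarith [h1.1]

lemma bdd_meas_intervalIntegrable (f : ℝ → ℝ) (hmeas : Measurable f) (C : ℝ)
    (hC : ∀ s, ‖f s‖ ≤ C) : ∀ a b : ℝ, IntervalIntegrable f volume a b := by
  intro a b
  rw [intervalIntegrable_iff]
  exact ⟨hmeas.aestronglyMeasurable,
    HasFiniteIntegral.restrict_of_bounded (C := C) measure_Ioc_lt_top
      (ae_of_all _ fun s => hC s)⟩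

lemma glue_uniq (x : ℝ) (δ : ℝ → ℝ) (hδmeas : Measurable δ)
    (hδ : ∀ w ≥ x, 0 ≤ δ w ∧ δ w < 1)
    (y : ℝ → ℝ)
    (hyrange : ∀ t ≥ (0:ℝ), x ≤ y t)
    (hy : ∀ t ≥ (0:ℝ), y t = x + ∫ s in (0:ℝ)..t, (1 - δ (y s)))
    (hyuniq : ∀ z : ℝ → ℝ, (∀ t ≥ (0:ℝ), x ≤ z t) →
      (∀ t ≥ (0:ℝ), z t = x + ∫ s in (0:ℝ)..t, (1 - δ (z s))) →
      ∀ t ≥ (0:ℝ), z t = y t)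
    (yinf : ℝ)
    (hyint : ∀ t ≥ (0:ℝ), IntervalIntegrable (fun s => 1 - δ (y s)) volume 0 t)
    (hy0 : y 0 = x)
    (hymono : ∀ s t : ℝ, 0 ≤ s → s ≤ t → y s ≤ y t ∧ y t - y s ≤ t - s)
    (hylt : ∀ t ≥ (0:ℝ), y t < yinf)
    (hysurj : ∀ v : ℝ, x ≤ v → v < yinf → ∃ c, 0 ≤ c ∧ y c = v)
    (z : ℝ → ℝ) (hzmono : Monotone z) (hzx : ∀ u, x ≤ z u)
    (U : ℝ) (hU : 0 ≤ U)
    (hzeq : ∀ u ∈ Set.Icc (0:ℝ) U, z u = x + ∫ v in (0:ℝ)..u, (1 - δ (z v))) :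
    ∀ u ∈ Set.Icc (0:ℝ) U, z u = y u := by
  have hzint : ∀ a b : ℝ, IntervalIntegrable (fun v => 1 - δ (z v)) volume a b := by
    refine bdd_meas_intervalIntegrable _
      (measurable_const.sub (hδmeas.comp hzmono.measurable)) 1 ?_
    intro s
    have := hδ (z s) (hzx s)
    rw [Real.norm_eq_abs, abs_le]
    constructor <;> linarith [this.1, this.2]
  have hzdiff : ∀ u v : ℝ, 0 ≤ u → u ≤ v → v ≤ U →
      z v - z u = ∫ s in u..v, (1 - δ (z s)) := by
    intro u v hu huv hvU
    rw [hzeq v ⟨hu.trans huv, hvU⟩, hzeq u ⟨hu, huv.trans hvU⟩]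
    rw [← intervalIntegral.integral_interval_sub_left (hzint 0 v) (hzint 0 u)]
    ring
  have hzlip : ∀ u v : ℝ, 0 ≤ u → u ≤ v → v ≤ U → z v - z u ≤ v - u := by
    intro u v hu huv hvU
    rw [hzdiff u v hu huv hvU]
    have h2 : ∫ s in u..v, (1 - δ (z s)) ≤ ∫ _ in u..v, (1:ℝ) := by
      refine intervalIntegral.integral_mono_on huv (hzint u v) intervalIntegrable_const ?_
      intro s hs
      have := hδ (z s) (hzx s)
      linarith [this.1]
    rw [intervalIntegral.integral_const, smul_eq_mul, mul_one] at h2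
    linarith
  have hz0 : z 0 = x := by
    rw [hzeq 0 ⟨le_rfl, hU⟩, intervalIntegral.integral_same, add_zero]
  -- Step 1 : gluing at a point u' where z u' < yinf
  have step1 : ∀ u' ∈ Set.Icc (0:ℝ) U, z u' < yinf → ∀ v ∈ Set.Icc (0:ℝ) u', z v = y v := by
    rintro u' ⟨hu'0, hu'U⟩ hzu'
    obtain ⟨c, hc0, hc⟩ := hysurj (z u') (hzx u') hzu'
    set w : ℝ → ℝ := fun v => if v ≤ u' then z v else y (v - u' + c) with hwdef
    have hwmono : Monotone w := by
      intro v₁ v₂ h12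
      by_cases h1 : v₁ ≤ u'
      · by_cases h2 : v₂ ≤ u'
        · simp only [hwdef, h1, h2, if_true]
          exact hzmono h12
        · push_neg at h2
          simp only [hwdef, h1, if_true, not_le.mpr h2, if_false]
          calc z v₁ ≤ z u' := hzmono h1
          _ = y c := hc.symm
          _ ≤ y (v₂ - u' + c) := (hymono c (v₂ - u' + c) hc0 (by linarith)).1
      · push_neg at h1
        have h2 : ¬ v₂ ≤ u' := not_le.mpr (lt_of_lt_of_le h1 h12)
        simp only [hwdef, not_le.mpr h1, h2, if_false]
        exact (hymono (v₁ - u' + c) (v₂ - u' + c) (by linarith) (by linarith)).1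
    have hwx : ∀ v, 0 ≤ v → x ≤ w v := by
      intro v hv
      by_cases h1 : v ≤ u' <;> simp only [hwdef, h1, if_true, if_false]
      · exact hzx v
      · push_neg at h1
        exact hyrange _ (by linarith)
    have hwint : ∀ a b : ℝ, IntervalIntegrable (fun s => 1 - δ (w s)) volume a b := by
      refine bdd_meas_intervalIntegrable _
        (measurable_const.sub (hδmeas.comp hwmono.measurable)) 1 ?_
      intro s
      have hwxs : x ≤ w s := by
        by_cases h1 : s ≤ u' <;> simp only [hwdef, h1, if_true, if_false]
        · exact hzx s
        · push_neg at h1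
          exact hyrange _ (by linarith [hu'0])
      have := hδ (w s) hwxs
      rw [Real.norm_eq_abs, abs_le]
      constructor <;> linarith [this.1, this.2]
    have hweq : ∀ v ≥ (0:ℝ), w v = x + ∫ s in (0:ℝ)..v, (1 - δ (w s)) := by
      intro v hv
      by_cases h1 : v ≤ u'
      · have e0 : w v = z v := by simp only [hwdef, h1, if_true]
        have e1 : ∫ s in (0:ℝ)..v, (1 - δ (w s)) = ∫ s in (0:ℝ)..v, (1 - δ (z s)) := by
          refine intervalIntegral.integral_congr ?_
          intro s hs
          rw [Set.uIcc_of_le hv] at hs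
          have : s ≤ u' := hs.2.trans h1
          simp only [hwdef, this, if_true]
        rw [e0, e1]
        exact hzeq v ⟨hv, h1.trans hu'U⟩
      · push_neg at h1
        have e0 : w v = y (v - u' + c) := by simp only [hwdef, not_le.mpr h1, if_false]
        have e1 : ∫ s in (0:ℝ)..u', (1 - δ (w s)) = ∫ s in (0:ℝ)..u', (1 - δ (z s)) := by
          refine intervalIntegral.integral_congr ?_
          intro s hs
          rw [Set.uIcc_of_le hu'0] at hs
          simp only [hwdef, hs.2, if_true]
        have e2 : z u' = x + ∫ s in (0:ℝ)..u', (1 - δ (z s)) := hzeq u' ⟨hu'0, hu'U⟩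
        have e3 : ∫ s in u'..v, (1 - δ (w s))
            = ∫ s in c..(v - u' + c), (1 - δ (y s)) := by
          have e3a := intervalIntegral.integral_comp_sub_right
            (a := u') (b := v) (fun s => 1 - δ (y s)) (u' - c)
          have e3b : u' - (u' - c) = c := by ring
          have e3c : v - (u' - c) = v - u' + c := by ring
          rw [e3b, e3c] at e3a
          rw [← e3a]
          refine intervalIntegral.integral_congr ?_
          intro s hs
          rw [Set.uIcc_of_le h1.le] at hs
          rcases eq_or_lt_of_le hs.1 with he | he
          · rw [← he]
            show 1 - δ (w u') = 1 - δ (y (u' - (u' - c)))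
            rw [e3b, hc]
            simp only [hwdef, le_refl, ite_true]
          · have : s - (u' - c) = s - u' + c := by ring
            simp only [hwdef, not_le.mpr he, if_false, this]
        have e4 : y (v - u' + c) = x + ∫ s in (0:ℝ)..(v - u' + c), (1 - δ (y s)) :=
          hy _ (by linarith)
        have e5 : (∫ s in (0:ℝ)..c, (1 - δ (y s))) + ∫ s in c..(v - u' + c), (1 - δ (y s))
            = ∫ s in (0:ℝ)..(v - u' + c), (1 - δ (y s)) := by
          refine intervalIntegral.integral_add_adjacent_intervals (hyint c hc0) ?_
          refine (hyint (v - u' + c) (by linarith)).mono_set ?_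
          rw [Set.uIcc_of_le (by linarith : c ≤ v - u' + c),
            Set.uIcc_of_le (by linarith : (0:ℝ) ≤ v - u' + c)]
          exact Set.Icc_subset_Icc hc0 le_rfl
        have e6 : y c = x + ∫ s in (0:ℝ)..c, (1 - δ (y s)) := hy c hc0
        have e7 : (∫ s in (0:ℝ)..u', (1 - δ (w s))) + ∫ s in u'..v, (1 - δ (w s))
            = ∫ s in (0:ℝ)..v, (1 - δ (w s)) :=
          intervalIntegral.integral_add_adjacent_intervals (hwint 0 u') (hwint u' v)
        rw [e0, e4, ← e5]
        rw [← e7, e1, e3]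
        have : y c = z u' := hc
        linarith [e2, e6]
    have hweqy := hyuniq w hwx hweq
    rintro v ⟨hv0, hvu'⟩
    have := hweqy v hv0
    simp only [hwdef, hvu', if_true] at this
    exact this
  -- Step 2 : z never reaches yinf on [0,U]
  set Bd := {u : ℝ | u ∈ Set.Icc (0:ℝ) U ∧ yinf ≤ z u} with hBdef
  rcases Set.eq_empty_or_nonempty Bd with hBemp | hBne
  · rintro u ⟨hu0, huU⟩
    have hzU : z U < yinf := by
      by_contra hcon
      push_neg at hcon
      have hmem : U ∈ Bd := ⟨⟨hU, le_rfl⟩, hcon⟩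
      rw [hBemp] at hmem
      exact absurd hmem (Set.notMem_empty U)
    exact step1 U ⟨hU, le_rfl⟩ hzU u ⟨hu0, huU⟩
  · exfalso
    have hBbdd : BddBelow Bd := ⟨0, fun s hs => hs.1.1⟩
    set u₀ := sInf Bd with hu₀def
    have hu₀0 : 0 ≤ u₀ := le_csInf hBne fun s hs => hs.1.1
    have hu₀U : u₀ ≤ U := by
      obtain ⟨b, hb⟩ := hBne
      exact le_trans (csInf_le hBbdd hb) hb.1.2
    have hyu₀ : y u₀ < yinf := hylt u₀ hu₀0
    set ε := (yinf - y u₀)/2 with hεdef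
    have hε : 0 < ε := by simp only [hεdef]; linarith
    obtain ⟨ub, hubB, hub⟩ := exists_lt_of_csInf_lt hBne (by linarith : sInf Bd < u₀ + ε/2)
    have hubu₀ : u₀ ≤ ub := csInf_le hBbdd hubB
    set u := max 0 (u₀ - ε/2) with hudef
    have hu0 : 0 ≤ u := le_max_left _ _
    have huu₀ : u ≤ u₀ := max_le hu₀0 (by linarith)
    have hzuy : z u = y u := by
      have huU' : u ∈ Set.Icc (0:ℝ) U := ⟨hu0, huu₀.trans hu₀U⟩
      have hzu : z u < yinf := by
        rcases lt_or_eq_of_le huu₀ with hlt | heq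
        · by_contra hcon
          push_neg at hcon
          exact absurd (csInf_le hBbdd ⟨huU', hcon⟩) (not_le.mpr hlt)
        · have hu₀eq : u₀ = 0 := by
            rcases le_or_gt u₀ (ε/2) with h | h
            · have : u = 0 := max_eq_left (by linarith)
              rw [this] at heq
              exact heq.symm
            · exfalso
              have : u = u₀ - ε/2 := max_eq_right (by linarith)
              rw [this] at heq
              linarith
          rw [heq, hu₀eq, hz0]
          have hx := hylt 0 le_rfl
          rw [hy0] at hx
          exact hx
      exact step1 u huU' hzu u ⟨hu0, le_rfl⟩
    have hlip : z ub - z u ≤ ub - u :=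
      hzlip u ub hu0 (huu₀.trans hubu₀) hubB.1.2
    have hyin : yinf ≤ z ub := hubB.2
    have hyuu₀ : y u ≤ y u₀ := (hymono u u₀ hu0 huu₀).1
    have hub_u : ub - u ≤ ε := by
      rcases le_or_gt (ε/2) u₀ with h | h
      · have : u = u₀ - ε/2 := max_eq_right (by linarith)
        rw [this]; linarith
      · have : u = 0 := max_eq_left (by linarith)
        rw [this]; linarith
    linarith

theorem natural_tax_bounded_by_ode_limit
    (x : ℝ) (X : ℝ → ℝ)
    (hX0 : X 0 = x)
    (hrc : ∀ t ≥ (0:ℝ), ContinuousWithinAt X (Set.Ici t) t)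
    (hll : ∀ t > (0:ℝ), ∃ l : ℝ, Tendsto X (nhdsWithin t (Set.Iio t)) (nhds l))
    (hnuj : ∀ t > (0:ℝ), ∀ l : ℝ,
      Tendsto X (nhdsWithin t (Set.Iio t)) (nhds l) → X t ≤ l)
    (F : StieltjesFunction ℝ) (hF : ∀ t ≥ (0:ℝ), F t = runMax X t)
    (δ : ℝ → ℝ) (hδmeas : Measurable δ)
    (hδ : ∀ z ≥ x, 0 ≤ δ z ∧ δ z < 1)
    (y : ℝ → ℝ)
    (hyrange : ∀ t ≥ (0:ℝ), x ≤ y t)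
    (hy : ∀ t ≥ (0:ℝ), y t = x + ∫ s in (0:ℝ)..t, (1 - δ (y s)))
    (hyuniq : ∀ z : ℝ → ℝ, (∀ t ≥ (0:ℝ), x ≤ z t) →
      (∀ t ≥ (0:ℝ), z t = x + ∫ s in (0:ℝ)..t, (1 - δ (z s))) →
      ∀ t ≥ (0:ℝ), z t = y t)
    -- y_x(∞) < ∞ : y has a finite limit at infinity
    (yinf : ℝ) (hyinf : Tendsto y atTop (nhds yinf))
    -- V is the natural tax process with rate δ:
    (V : ℝ → ℝ)
    (hV : ∀ t ≥ (0:ℝ), V t = X t - ∫ s in Set.Ioc 0 t, δ (runMax V s) ∂F.measure) :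
    (∀ t ≥ (0:ℝ), runMax V t = y (runMax X t - x) ∧ runMax V t < yinf) ∧
    -- for a ≥ y_x(∞), the first passage time above a is infinite:
    (∀ a : ℝ, yinf ≤ a → {t : ℝ | 0 ≤ t ∧ a < V t} = ∅) := by
  have hbddX := cadlag_bddAbove X hrc hll
  have hφmono : Monotone (rmc X) := rmc_mono X hbddX
  have hφcont : Continuous (rmc X) := rmc_continuous X hrc hll hnuj hbddX
  have hφ0 : rmc X 0 = x := by rw [rmc, max_self, runMax_zero, hX0]
  have hFφ : ∀ s ≥ (0:ℝ), F s = rmc X s := fun s hs => by rw [hF s hs, rmc_eq X hs]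
  obtain ⟨hV0, hbddV⟩ := V_bdd x X hX0 hrc hll hnuj F hF δ hδmeas hδ V hV
  have hxleV : ∀ u, 0 ≤ u → x ≤ runMax V u := fun u hu => by
    rw [← hV0]; exact le_runMax V hbddV le_rfl hu
  have hyint := y_integrable x δ hδmeas hδ y hyrange hy
  obtain ⟨hy0, hymono, hylt, hysurj⟩ := y_props x δ hδ y hyrange hy hyint yinf hyinf
  have hFfin : ∀ r : ℝ, F.measure (Set.Ioc 0 r) < ⊤ := by
    intro r; rw [F.measure_Ioc]; exact ENNReal.ofReal_lt_top
  have hDIntOn : ∀ r, 0 ≤ r →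
      IntegrableOn (fun u => δ (runMax V u)) (Set.Ioc 0 r) F.measure := by
    intro r hr
    have hclamp : Monotone (fun u => runMax V (min (max u 0) r)) := by
      intro a b hab
      exact runMax_mono V hbddV (le_min (le_max_right a 0) hr)
        (min_le_min (max_le_max hab le_rfl) le_rfl)
    have hmeas : Measurable (fun u => δ (runMax V (min (max u 0) r))) :=
      hδmeas.comp hclamp.measurable
    have hbound : ∀ u, ‖δ (runMax V (min (max u 0) r))‖ ≤ 1 := by
      intro u
      have := hδ _ (hxleV _ (le_min (le_max_right u 0) hr))
      rw [Real.norm_eq_abs, abs_le]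
      constructor <;> linarith [this.1, this.2]
    have hIg : IntegrableOn (fun u => δ (runMax V (min (max u 0) r)))
        (Set.Ioc 0 r) F.measure :=
      ⟨hmeas.aestronglyMeasurable,
        HasFiniteIntegral.restrict_of_bounded (C := 1) (hFfin r) (ae_of_all _ hbound)⟩
    refine IntegrableOn.congr_fun hIg (fun u hu => ?_) measurableSet_Ioc
    show δ (runMax V (min (max u 0) r)) = δ (runMax V u)
    rw [max_eq_left hu.1.le, min_eq_left hu.2]
  set A : ℝ → ℝ := fun r => ∫ s in Set.Ioc 0 r, δ (runMax V s) ∂F.measure with hAdef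
  have hVA : ∀ t ≥ (0:ℝ), V t = X t - A t := hV
  have hAdiff : ∀ s t : ℝ, 0 ≤ s → s ≤ t →
      A t - A s = ∫ u in Set.Ioc s t, δ (runMax V u) ∂F.measure := by
    intro s t hs hst
    have hdisj : Disjoint (Set.Ioc (0:ℝ) s) (Set.Ioc s t) := Set.Ioc_disjoint_Ioc_of_le le_rfl
    have hsplit : Set.Ioc (0:ℝ) s ∪ Set.Ioc s t = Set.Ioc 0 t :=
      Set.Ioc_union_Ioc_eq_Ioc hs hst
    have h1 := setIntegral_union hdisj measurableSet_Ioc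
      ((hDIntOn t (hs.trans hst)).mono_set (Set.Ioc_subset_Ioc le_rfl hst))
      ((hDIntOn t (hs.trans hst)).mono_set (Set.Ioc_subset_Ioc hs le_rfl))
      (f := fun u => δ (runMax V u)) (μ := F.measure)
    rw [hsplit] at h1
    simp only [hAdef]
    rw [h1]
    ring
  have hA_le : ∀ s t : ℝ, 0 ≤ s → s ≤ t → A t - A s ≤ rmc X t - rmc X s := by
    intro s t hs hst
    rw [hAdiff s t hs hst]
    have h1 : ∫ u in Set.Ioc s t, δ (runMax V u) ∂F.measure
        ≤ ∫ _ in Set.Ioc s t, (1:ℝ) ∂F.measure := by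
      refine setIntegral_mono_on
        ((hDIntOn t (hs.trans hst)).mono_set (Set.Ioc_subset_Ioc hs le_rfl))
        ((integrableOn_const_iff (C := (1:ℝ))).mpr (Or.inr (lt_of_le_of_lt
          (measure_mono (Set.Ioc_subset_Ioc hs le_rfl)) (hFfin t))))
        measurableSet_Ioc ?_
      intro u hu
      exact (hδ _ (hxleV u (hs.trans hu.1.le))).2.le
    rw [setIntegral_const, smul_eq_mul, mul_one, measureReal_def,
      stieltjes_Ioc F X hF hs hst,
      ENNReal.toReal_ofReal (sub_nonneg.mpr (hφmono hst))] at h1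
    exact h1
  have hA_nonneg : ∀ s t : ℝ, 0 ≤ s → s ≤ t → 0 ≤ A t - A s := by
    intro s t hs hst
    rw [hAdiff s t hs hst]
    exact setIntegral_nonneg measurableSet_Ioc
      (fun u hu => (hδ _ (hxleV u (hs.trans hu.1.le))).1)
  have hVbar : ∀ t ≥ (0:ℝ), runMax V t = rmc X t - A t := by
    intro t ht
    refine le_antisymm ?_ ?_
    · refine runMax_le V ht ?_
      rintro r ⟨hr0, hrt⟩
      have h1 := hA_le r t hr0 hrt
      have h2 : X r ≤ rmc X r := by
        rw [rmc_eq X hr0]; exact le_runMax X hbddX hr0 le_rfl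
      have h3 := hVA r hr0
      linarith
    · have h3 : runMax X t ≤ runMax V t + A t := by
        refine runMax_le X ht ?_
        rintro r ⟨hr0, hrt⟩
        have h4 : V r ≤ runMax V t := le_runMax V hbddV hr0 hrt
        have h5 := hA_nonneg r t hr0 hrt
        have h6 := hVA r hr0
        linarith
      rw [rmc_eq X ht]
      linarith
  have main1 : ∀ t ≥ (0:ℝ), runMax V t = y (runMax X t - x) ∧ runMax V t < yinf := by
    intro t ht
    set U := rmc X t - x with hUdef
    have hU0 : 0 ≤ U := by
      have := hφmono ht
      rw [hφ0] at this
      simp only [hUdef]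
      linarith
    set Sf : ℝ → Set ℝ := fun u => {s : ℝ | s ∈ Set.Icc 0 t ∧ x + u ≤ rmc X s} with hSfdef
    set Tf : ℝ → ℝ := fun u => sInf (Sf u) with hTfdef
    have htmem : ∀ u, u ≤ U → t ∈ Sf u := by
      intro u hu
      have : u ≤ rmc X t - x := hu
      exact ⟨⟨ht, le_rfl⟩, by linarith⟩
    have hSne : ∀ u, u ≤ U → (Sf u).Nonempty := fun u hu => ⟨t, htmem u hu⟩
    have hSbdd : ∀ u, BddBelow (Sf u) := fun u => ⟨0, fun s hs => hs.1.1⟩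
    have hT0 : ∀ u, u ≤ U → 0 ≤ Tf u := fun u hu =>
      le_csInf (hSne u hu) fun s hs => hs.1.1
    have hTt : ∀ u, u ≤ U → Tf u ≤ t := fun u hu => csInf_le (hSbdd u) (htmem u hu)
    have hSclosed : ∀ u, IsClosed (Sf u) := by
      intro u
      have he : Sf u = Set.Icc 0 t ∩ (rmc X) ⁻¹' (Set.Ici (x + u)) := rfl
      rw [he]
      exact isClosed_Icc.inter (IsClosed.preimage hφcont isClosed_Ici)
    have hTmem : ∀ u, u ≤ U → Tf u ∈ Sf u := fun u hu =>
      (hSclosed u).csInf_mem (hSne u hu) (hSbdd u)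
    have hφT : ∀ u, 0 ≤ u → u ≤ U → rmc X (Tf u) = x + u := by
      intro u hu0 huU
      refine le_antisymm ?_ (hTmem u huU).2
      rcases eq_or_lt_of_le (hT0 u huU) with h0 | h0
      · have h1 : rmc X (Tf u) = x := by rw [← h0, hφ0]
        rw [h1]
        linarith
      · haveI : Filter.NeBot (nhdsWithin (Tf u) (Set.Iio (Tf u))) := nhdsLT_neBot (Tf u)
        refine le_of_tendsto (x := nhdsWithin (Tf u) (Set.Iio (Tf u)))
          ((hφcont.tendsto (Tf u)).mono_left nhdsWithin_le_nhds) ?_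
        filter_upwards [Ioo_mem_nhdsLT h0] with s hs
        by_contra hcon
        push_neg at hcon
        have hsmem : s ∈ Sf u := ⟨⟨hs.1.le, hs.2.le.trans (hTt u huU)⟩, hcon.le⟩
        exact absurd (csInf_le (hSbdd u) hsmem) (not_le.mpr hs.2)
    have hTmono : ∀ u v, u ≤ v → v ≤ U → Tf u ≤ Tf v := by
      intro u v huv hvU
      refine le_csInf (hSne v hvU) ?_
      intro s hs
      exact csInf_le (hSbdd u) ⟨hs.1, le_trans (by linarith) hs.2⟩
    have hurange : ∀ s, 0 ≤ s → s ≤ t → 0 ≤ rmc X s - x ∧ rmc X s - x ≤ U := by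
      intro s hs0 hst
      have h1 := hφmono hs0
      rw [hφ0] at h1
      have h2 := hφmono hst
      simp only [hUdef]
      constructor <;> linarith
    have hconst : ∀ s, 0 ≤ s → s ≤ t → runMax V s = runMax V (Tf (rmc X s - x)) := by
      intro s hs0 hst
      obtain ⟨hu0, huU⟩ := hurange s hs0 hst
      have hTle : Tf (rmc X s - x) ≤ s :=
        csInf_le (hSbdd _) ⟨⟨hs0, hst⟩, by linarith⟩
      have hφeq : rmc X (Tf (rmc X s - x)) = rmc X s := by
        rw [hφT _ hu0 huU]; ring
      have h1 := hA_le (Tf (rmc X s - x)) s (hT0 _ huU) hTle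
      have h2 := hA_nonneg (Tf (rmc X s - x)) s (hT0 _ huU) hTle
      rw [hφeq] at h1
      have hAeq : A s = A (Tf (rmc X s - x)) := by linarith
      rw [hVbar s hs0, hVbar (Tf (rmc X s - x)) (hT0 _ huU), hφeq, hAeq]
    set z : ℝ → ℝ := fun u => runMax V (Tf (min (max u 0) U)) with hzdef
    have hclamp : ∀ u, 0 ≤ u → u ≤ U → min (max u 0) U = u := by
      intro u h1 h2
      rw [max_eq_left h1, min_eq_left h2]
    have hzmono : Monotone z := by
      intro a b hab
      have h1 : Tf (min (max a 0) U) ≤ Tf (min (max b 0) U) :=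
        hTmono _ _ (min_le_min (max_le_max hab le_rfl) le_rfl) (min_le_right _ _)
      exact runMax_mono V hbddV (hT0 _ (min_le_right _ _)) h1
    have hzx : ∀ u, x ≤ z u := fun u => hxleV _ (hT0 _ (min_le_right _ _))
    have hδzint : ∀ a b : ℝ, IntervalIntegrable (fun w => δ (z w)) volume a b := by
      refine bdd_meas_intervalIntegrable _ (hδmeas.comp hzmono.measurable) 1 ?_
      intro w
      have := hδ _ (hzx w)
      rw [Real.norm_eq_abs, abs_le]
      constructor <;> linarith [this.1, this.2]
    have hzeq : ∀ u ∈ Set.Icc (0:ℝ) U, z u = x + ∫ v in (0:ℝ)..u, (1 - δ (z v)) := by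
      rintro u ⟨hu0, huU⟩
      have hTu0 := hT0 u huU
      have hTut := hTt u huU
      have e1 : z u = runMax V (Tf u) := by
        simp only [hzdef]
        rw [hclamp u hu0 huU]
      have e2 : runMax V (Tf u) = rmc X (Tf u) - A (Tf u) := hVbar _ hTu0
      have e3 : rmc X (Tf u) = x + u := hφT u hu0 huU
      have hgmeas : Measurable (fun v : ℝ => δ (z (v - x))) :=
        hδmeas.comp (hzmono.measurable.comp (measurable_id.sub_const x))
      have e4a : A (Tf u) = ∫ s in Set.Ioc 0 (Tf u), δ (z (rmc X s - x)) ∂F.measure := by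
        refine setIntegral_congr_fun measurableSet_Ioc ?_
        intro s hs
        have hs0 : 0 ≤ s := hs.1.le
        have hst : s ≤ t := hs.2.trans hTut
        obtain ⟨hr0, hrU⟩ := hurange s hs0 hst
        have hzs : z (rmc X s - x) = runMax V (Tf (rmc X s - x)) := by
          simp only [hzdef]
          rw [hclamp _ hr0 hrU]
        simp only
        rw [hzs, ← hconst s hs0 hst]
      have e4 : A (Tf u) = ∫ v in Set.Ioc (rmc X 0) (rmc X (Tf u)), δ (z (v - x)) := by
        rw [e4a]
        exact integral_pushforward (rmc X) hφmono hφcont F hFφ hTu0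
          (fun v => δ (z (v - x))) hgmeas
          (map_pushforward (rmc X) hφmono hφcont F hFφ hTu0)
      have e5 : ∫ v in Set.Ioc (rmc X 0) (rmc X (Tf u)), δ (z (v - x))
          = ∫ w in (0:ℝ)..u, δ (z w) := by
        rw [hφ0, e3]
        rw [← intervalIntegral.integral_of_le (by linarith : x ≤ x + u)]
        have hcomp := intervalIntegral.integral_comp_sub_right
          (a := x) (b := x + u) (fun w => δ (z w)) x
        have ea : x - x = (0:ℝ) := sub_self x
        have eb : x + u - x = u := by ring
        rw [ea, eb] at hcomp
        exact hcomp
      have e6 : ∫ v in (0:ℝ)..u, (1 - δ (z v)) = u - ∫ v in (0:ℝ)..u, δ (z v) := by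
        rw [intervalIntegral.integral_sub intervalIntegrable_const (hδzint 0 u),
          intervalIntegral.integral_const, smul_eq_mul, mul_one, sub_zero]
      rw [e1, e2, e3, e4, e5, e6]
      ring
    have hzy := glue_uniq x δ hδmeas hδ y hyrange hy hyuniq yinf hyint hy0 hymono
      hylt hysurj z hzmono hzx U hU0 hzeq
    have hfinal : runMax V t = z U := by
      have h1 := hconst t ht le_rfl
      have h2 : z U = runMax V (Tf (rmc X t - x)) := by
        simp only [hzdef]
        rw [hclamp U hU0 le_rfl]
      rw [h1, h2]
    have hyU := hzy U ⟨hU0, le_rfl⟩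
    constructor
    · rw [hfinal, hyU, hUdef, rmc_eq X ht]
    · rw [hfinal, hyU]
      exact hylt U hU0
  refine ⟨main1, ?_⟩
  intro a ha
  rw [Set.eq_empty_iff_forall_notMem]
  rintro t ⟨ht0, hat⟩
  have h1 := (main1 t ht0).2
  have h2 : V t ≤ runMax V t := le_runMax V hbddV ht0 le_rfl
  linarith
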